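/- With the setup of the previous construction: let G be the s-partite (s-1)-uniform hypergraph on parts V_1,…,V_s (each a copy of [n]) whose edges are all (s-1)-element subsets of the sets K_{x,y} for x ∈ [n/s]^{s-2}, y ∈ B, where B ⊆ [n/s] has no nontrivial solution to y_1+y_2 = 2y_3. Then every canonical copy of K_s^{(s-1)} in G (vertices v_1 ∈ V_1, …, v_s ∈ V_s spanning all s possible (s-1)-edges) equals K_{x,y} for some x ∈ [n/s]^{s-2} and y ∈ B. In particular G has at most (n/s)^{s-2}·|B| ≤ n^{s-1} canonical copies of K_s^{(s-1)}. -/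

import Mathlib

set_option maxHeartbeats 1000000


/-- In the (s-1)-uniform s-partite hypergraph G whose edges are the
(s-1)-subsets of the sets K_{x,y}, every canonical copy of K_s^{(s-1)}
(a transversal v spanning all s possible (s-1)-edges) equals some K_{x,y};
in particular there are at most n^{s-1} canonical copies of K_s^{(s-1)}. -/
theorem stmt_13 (s n : ℕ) (hs : 3 ≤ s) (B : Finset ℕ)
    (hB : B ⊆ Finset.Icc 1 (n / s))
    (hBsol : ∀ y₁ ∈ B, ∀ y₂ ∈ B, ∀ y₃ ∈ B, y₁ + y₂ = 2 * y₃ →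
      y₁ = y₂ ∧ y₂ = y₃)
    (K : (ℕ → ℕ) → ℕ → ℕ → ℕ)
    (hK : ∀ x y i, K x y i =
      if i < s - 2 then x i
      else if i = s - 2 then y + ∑ j ∈ Finset.range (s - 2), x j
      else 2 * y + ∑ j ∈ Finset.range (s - 2), x j) :
    (∀ v : Fin s → ℕ, (∀ i, v i ∈ Finset.Icc 1 n) →
      (∀ j : Fin s, ∃ x : ℕ → ℕ, (∀ i < s - 2, x i ∈ Finset.Icc 1 (n / s)) ∧
        ∃ y ∈ B, ∀ i : Fin s, i ≠ j → v i = K x y i.val) →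
      ∃ x : ℕ → ℕ, (∀ i < s - 2, x i ∈ Finset.Icc 1 (n / s)) ∧
        ∃ y ∈ B, ∀ i : Fin s, v i = K x y i.val) ∧
    Set.ncard {v : Fin s → ℕ | (∀ i, v i ∈ Finset.Icc 1 n) ∧
      ∀ j : Fin s, ∃ x : ℕ → ℕ, (∀ i < s - 2, x i ∈ Finset.Icc 1 (n / s)) ∧
        ∃ y ∈ B, ∀ i : Fin s, i ≠ j → v i = K x y i.val} ≤ n ^ (s - 1) := by
  obtain ⟨m, rfl⟩ : ∃ m, s = m + 3 := ⟨s - 3, by omega⟩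
  have hm2 : m + 3 - 2 = m + 1 := by omega
  have hKlt : ∀ x y i, i < m + 1 → K x y i = x i := by
    intro x y i hi
    rw [hK, if_pos (by omega)]
  have hKmid : ∀ x y, K x y (m + 1) = y + ∑ j ∈ Finset.range (m + 1), x j := by
    intro x y
    rw [hK, if_neg (by omega), if_pos (by omega), hm2]
  have hKtop : ∀ x y, K x y (m + 2) = 2 * y + ∑ j ∈ Finset.range (m + 1), x j := by
    intro x y
    rw [hK, if_neg (by omega), if_neg (by omega), hm2]
  have main : ∀ v : Fin (m + 3) → ℕ, (∀ i, v i ∈ Finset.Icc 1 n) →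
      (∀ j : Fin (m + 3), ∃ x : ℕ → ℕ,
        (∀ i < m + 3 - 2, x i ∈ Finset.Icc 1 (n / (m + 3))) ∧
        ∃ y ∈ B, ∀ i : Fin (m + 3), i ≠ j → v i = K x y i.val) →
      ∃ x : ℕ → ℕ, (∀ i < m + 3 - 2, x i ∈ Finset.Icc 1 (n / (m + 3))) ∧
        ∃ y ∈ B, ∀ i : Fin (m + 3), v i = K x y i.val := by
    intro v hv hspan
    obtain ⟨x, hx, y, hy, h1⟩ := hspan ⟨m + 2, by omega⟩
    obtain ⟨x', hx', y', hy', h2⟩ := hspan ⟨m + 1, by omega⟩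
    obtain ⟨x'', hx'', y'', hy'', h3⟩ := hspan ⟨0, by omega⟩
    have hSx : ∀ i : Fin (m + 3), i.val < m + 1 → v i = x i.val := by
      intro i hi
      rw [h1 i (Fin.ne_of_val_ne (show _ ≠ _ by simp only [Fin.val_mk]; omega)), hKlt _ _ _ hi]
    have hsum' : ∑ j ∈ Finset.range (m + 1), x' j = ∑ j ∈ Finset.range (m + 1), x j := by
      refine Finset.sum_congr rfl (fun j hj => ?_)
      have hj' := Finset.mem_range.mp hj
      have e1 : v ⟨j, by omega⟩ = x' j := by
        rw [h2 ⟨j, by omega⟩ (Fin.ne_of_val_ne (show _ ≠ _ by simp only [Fin.val_mk]; omega)), hKlt _ _ _ hj']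
      rw [← e1, hSx ⟨j, by omega⟩ hj']
    have ea : v ⟨m + 1, by omega⟩ = y + ∑ j ∈ Finset.range (m + 1), x j := by
      rw [h1 ⟨m + 1, by omega⟩ (Fin.ne_of_val_ne (show _ ≠ _ by simp only [Fin.val_mk]; omega)), hKmid]
    have eb : v ⟨m + 2, by omega⟩ = 2 * y' + ∑ j ∈ Finset.range (m + 1), x j := by
      rw [h2 ⟨m + 2, by omega⟩ (Fin.ne_of_val_ne (show _ ≠ _ by simp only [Fin.val_mk]; omega)), hKtop, hsum']
    have ea'' : v ⟨m + 1, by omega⟩ = y'' + ∑ j ∈ Finset.range (m + 1), x'' j := by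
      rw [h3 ⟨m + 1, by omega⟩ (Fin.ne_of_val_ne (show _ ≠ _ by simp only [Fin.val_mk]; omega)), hKmid]
    have eb'' : v ⟨m + 2, by omega⟩ = 2 * y'' + ∑ j ∈ Finset.range (m + 1), x'' j := by
      rw [h3 ⟨m + 2, by omega⟩ (Fin.ne_of_val_ne (show _ ≠ _ by simp only [Fin.val_mk]; omega)), hKtop]
    have hyy : y + y'' = 2 * y' := by
      have := ea; have := eb; have := ea''; have := eb''
      linarith [ea, eb, ea'', eb'']
    obtain ⟨e1, e2⟩ := hBsol y hy y'' hy'' y' hy' hyy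
    refine ⟨x, hx, y, hy, fun i => ?_⟩
    rcases lt_trichotomy i.val (m + 1) with h | h | h
    · rw [hKlt _ _ _ h]
      exact hSx i h
    · have : i = ⟨m + 1, by omega⟩ := Fin.ext h
      rw [this]
      rw [show ((⟨m + 1, by omega⟩ : Fin (m + 3)) : ℕ) = m + 1 from rfl, hKmid]
      exact ea
    · have h2' : i.val = m + 2 := by omega
      have : i = ⟨m + 2, by omega⟩ := Fin.ext h2'
      rw [this]
      rw [show ((⟨m + 2, by omega⟩ : Fin (m + 3)) : ℕ) = m + 2 from rfl, hKtop]
      rw [eb, e1, e2]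
  refine ⟨main, ?_⟩
  set S : Set (Fin (m + 3) → ℕ) := {v : Fin (m + 3) → ℕ |
    (∀ i, v i ∈ Finset.Icc 1 n) ∧
      ∀ j : Fin (m + 3), ∃ x : ℕ → ℕ,
        (∀ i < m + 3 - 2, x i ∈ Finset.Icc 1 (n / (m + 3))) ∧
        ∃ y ∈ B, ∀ i : Fin (m + 3), i ≠ j → v i = K x y i.val} with hS
  have hm1 : m + 3 - 1 = m + 2 := by omega
  rw [hm1]
  set r : (Fin (m + 3) → ℕ) → (Fin (m + 2) → ℕ) :=
    fun v i => v ⟨i.val, by omega⟩ with hr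
  have hinj : Set.InjOn r S := by
    intro v hv v' hv' h
    obtain ⟨x, hx, y, hy, hxy⟩ := main v hv.1 hv.2
    obtain ⟨x', hx', y', hy', hxy'⟩ := main v' hv'.1 hv'.2
    have hlow : ∀ i : Fin (m + 3), i.val < m + 2 → v i = v' i := by
      intro i hi
      have := congrFun h ⟨i.val, hi⟩
      simpa [hr, Fin.eta] using this
    have hsum : ∑ j ∈ Finset.range (m + 1), x j = ∑ j ∈ Finset.range (m + 1), x' j := by
      refine Finset.sum_congr rfl (fun j hj => ?_)
      have hj' := Finset.mem_range.mp hj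
      have e1 : v ⟨j, by omega⟩ = x j :=
        (hxy ⟨j, by omega⟩).trans (hKlt x y j hj')
      have e2 : v' ⟨j, by omega⟩ = x' j :=
        (hxy' ⟨j, by omega⟩).trans (hKlt x' y' j hj')
      rw [← e1, ← e2]
      exact hlow ⟨j, by omega⟩ (show j < m + 2 by omega)
    have hmid : y + ∑ j ∈ Finset.range (m + 1), x j
        = y' + ∑ j ∈ Finset.range (m + 1), x' j := by
      have e1 : v ⟨m + 1, by omega⟩ = y + ∑ j ∈ Finset.range (m + 1), x j :=
        (hxy ⟨m + 1, by omega⟩).trans (hKmid x y)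
      have e2 : v' ⟨m + 1, by omega⟩ = y' + ∑ j ∈ Finset.range (m + 1), x' j :=
        (hxy' ⟨m + 1, by omega⟩).trans (hKmid x' y')
      rw [← e1, ← e2]
      exact hlow ⟨m + 1, by omega⟩ (show m + 1 < m + 2 by omega)
    have hyeq : y = y' := by omega
    funext i
    rcases lt_or_ge i.val (m + 2) with hi | hi
    · exact hlow i hi
    · have : i = ⟨m + 2, by omega⟩ := Fin.ext (show i.val = m + 2 by omega)
      rw [this]
      have e1 : v ⟨m + 2, by omega⟩ = 2 * y + ∑ j ∈ Finset.range (m + 1), x j :=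
        (hxy ⟨m + 2, by omega⟩).trans (hKtop x y)
      have e2 : v' ⟨m + 2, by omega⟩ = 2 * y' + ∑ j ∈ Finset.range (m + 1), x' j :=
        (hxy' ⟨m + 2, by omega⟩).trans (hKtop x' y')
      rw [e1, e2, hsum, hyeq]
  have himg : r '' S ⊆ ↑(Fintype.piFinset fun _ : Fin (m + 2) => Finset.Icc 1 n) := by
    rintro w ⟨v, hv, rfl⟩
    simp only [Finset.coe_sort_coe, Finset.mem_coe, Fintype.mem_piFinset]
    intro i
    exact hv.1 _
  calc S.ncard = (r '' S).ncard := (Set.ncard_image_of_injOn hinj).symm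
    _ ≤ (↑(Fintype.piFinset fun _ : Fin (m + 2) => Finset.Icc 1 n) : Set (Fin (m + 2) → ℕ)).ncard :=
        Set.ncard_le_ncard himg (Finset.finite_toSet _)
    _ = (Fintype.piFinset fun _ : Fin (m + 2) => Finset.Icc 1 n).card :=
        Set.ncard_coe_finset _
    _ ≤ n ^ (m + 2) := by
        simp [Fintype.card_piFinset]
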